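/- Let s(x,y,z) = xᵀAy + xᵀBz + yᵀCz + zᵀDz + f(x) + g(y) on ℝⁿ × ℝⁿ × ℝⁿ with D + Dᵀ negative definite, C invertible, and B − A(Cᵀ)⁻¹(D + Dᵀ) nonsingular, with f differentiable. Then s is twisted on z-trivial splitting sets: for each x and p ∈ ℝⁿ, at most one point (y,z) of any z-trivial splitting set at x satisfies p = D_x s(x,y,z). -/

import Mathlib

open Matrix

lemma foc {n : ℕ} (D : Matrix (Fin n) (Fin n) ℝ) (hD : (-(D + Dᵀ)).PosDef)
    (a z : Fin n → ℝ)
    (h : ∀ z', a ⬝ᵥ z' + z' ⬝ᵥ D *ᵥ z' ≤ a ⬝ᵥ z + z ⬝ᵥ D *ᵥ z) :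
    a + (D + Dᵀ) *ᵥ z = 0 := by
  set w : Fin n → ℝ := a + (D + Dᵀ) *ᵥ z with hw
  by_contra hw0
  have hc : 0 < w ⬝ᵥ w := by
    have := dotProduct_self_star_pos_iff (v := w)
    simp only [star_trivial] at this
    exact this.mpr hw0
  have hdneg : w ⬝ᵥ (D + Dᵀ) *ᵥ w < 0 := by
    have := hD.dotProduct_mulVec_pos hw0
    simp only [star_trivial, neg_mulVec, dotProduct_neg] at this
    linarith
  have hsym : ∀ v : Fin n → ℝ, w ⬝ᵥ Dᵀ *ᵥ v = v ⬝ᵥ D *ᵥ w := fun v => by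
    rw [dotProduct_mulVec w Dᵀ v, ← mulVec_transpose, transpose_transpose,
      dotProduct_comm]
  have hd : w ⬝ᵥ D *ᵥ w < 0 := by
    have := hsym w
    rw [add_mulVec, dotProduct_add, this] at hdneg; linarith
  set d : ℝ := w ⬝ᵥ D *ᵥ w with hdd
  set c : ℝ := w ⬝ᵥ w with hcc
  set t : ℝ := c / (-2 * d) with ht
  have ht0 : 0 < t := div_pos hc (by linarith)
  have key := h (z + t • w)
  have hwdef : c = w ⬝ᵥ a + (w ⬝ᵥ D *ᵥ z + z ⬝ᵥ D *ᵥ w) := by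
    rw [hcc]
    conv_lhs => rw [hw]
    rw [dotProduct_add, add_mulVec, dotProduct_add, ← hsym z, hw]
    simp only [add_mulVec, add_dotProduct, dotProduct_add]
  have hexp : a ⬝ᵥ (z + t • w) + (z + t • w) ⬝ᵥ D *ᵥ (z + t • w)
      = a ⬝ᵥ z + z ⬝ᵥ D *ᵥ z + t * c + t * t * d := by
    simp only [dotProduct_add, add_dotProduct, mulVec_add, mulVec_smul,
      dotProduct_smul, smul_dotProduct, smul_eq_mul]
    rw [hwdef, dotProduct_comm w a]
    ring
  rw [hexp] at key
  have : t * c + t * t * d ≤ 0 := by linarith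
  have hd0 : d ≠ 0 := ne_of_lt hd
  have htc : t * c + t * t * d = t * c / 2 := by
    rw [ht]; field_simp; ring
  nlinarith

noncomputable def dotCLM {n : ℕ} (u : Fin n → ℝ) : (Fin n → ℝ) →L[ℝ] ℝ :=
  LinearMap.toContinuousLinearMap
    { toFun := fun v => v ⬝ᵥ u
      map_add' := fun a b => add_dotProduct a b u
      map_smul' := fun c a => smul_dotProduct c a u }

lemma dotCLM_apply {n : ℕ} (u v : Fin n → ℝ) : dotCLM u v = v ⬝ᵥ u := rfl

lemma hasFDerivAt_dot {n : ℕ} (u x : Fin n → ℝ) :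
    HasFDerivAt (fun v => v ⬝ᵥ u) (dotCLM u) x := (dotCLM u).hasFDerivAt

/-- the bilinear-quadratic surplus is twisted on z-trivial splitting sets when
`D + Dᵀ < 0`, `C` is invertible and `B − A(Cᵀ)⁻¹(D + Dᵀ)` is nonsingular. -/
theorem stmt_12 {n : ℕ} (A B C D : Matrix (Fin n) (Fin n) ℝ)
    (f g : (Fin n → ℝ) → ℝ) (hf : Differentiable ℝ f)
    (hD : (-(D + Dᵀ)).PosDef) (hC : IsUnit C)
    (hBACD : IsUnit (B - A * (Cᵀ)⁻¹ * (D + Dᵀ))) :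
    let s : (Fin n → ℝ) → (Fin n → ℝ) → (Fin n → ℝ) → ℝ := fun x y z =>
      x ⬝ᵥ A.mulVec y + x ⬝ᵥ B.mulVec z + y ⬝ᵥ C.mulVec z + z ⬝ᵥ D.mulVec z + f x + g y
    ∀ (x : Fin n → ℝ) (S : Set ((Fin n → ℝ) × (Fin n → ℝ))) (V : (Fin n → ℝ) → ℝ),
      (∀ y z, s x y z ≤ V y) → (∀ p ∈ S, s x p.1 p.2 = V p.1) →
      ∀ p ∈ S, ∀ q ∈ S,
        fderiv ℝ (fun x' => s x' p.1 p.2) x = fderiv ℝ (fun x' => s x' q.1 q.2) x →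
        p = q := by
  intro s x S V hub hS p hp q hq hder
  -- first-order conditions
  have hfoc : ∀ r ∈ S, Bᵀ *ᵥ x + Cᵀ *ᵥ r.1 + (D + Dᵀ) *ᵥ r.2 = 0 := by
    intro r hr
    have hmax : ∀ z', s x r.1 z' ≤ s x r.1 r.2 := fun z' =>
      (hub r.1 z').trans_eq (hS r hr).symm
    have h := foc D hD (Bᵀ *ᵥ x + Cᵀ *ᵥ r.1) r.2 ?_
    · exact h
    · intro z'
      have h1 := hmax z'
      simp only [s] at h1
      have e1 : ∀ v : Fin n → ℝ, (Bᵀ *ᵥ x + Cᵀ *ᵥ r.1) ⬝ᵥ v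
          = x ⬝ᵥ B *ᵥ v + r.1 ⬝ᵥ C *ᵥ v := by
        intro v
        simp only [add_dotProduct, mulVec_transpose, ← dotProduct_mulVec]
      rw [e1, e1]
      linarith
  -- derivative computation
  have hder' : ∀ (y z : Fin n → ℝ),
      fderiv ℝ (fun x' => s x' y z) x
        = dotCLM (A *ᵥ y) + dotCLM (B *ᵥ z) + fderiv ℝ f x := by
    intro y z
    have h1 : HasFDerivAt (fun x' => s x' y z)
        (dotCLM (A *ᵥ y) + dotCLM (B *ᵥ z) + fderiv ℝ f x) x := by
      have h2 := ((((hasFDerivAt_dot (A *ᵥ y) x).add (hasFDerivAt_dot (B *ᵥ z) x)).add_const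
        (y ⬝ᵥ C *ᵥ z)).add_const (z ⬝ᵥ D *ᵥ z)).add (hf x).hasFDerivAt |>.add_const (g y)
      exact h2
    exact h1.fderiv
  rw [hder' p.1 p.2, hder' q.1 q.2] at hder
  have hlin : ∀ v : Fin n → ℝ,
      (A *ᵥ p.1 + B *ᵥ p.2) ⬝ᵥ v = (A *ᵥ q.1 + B *ᵥ q.2) ⬝ᵥ v := by
    intro v
    have := DFunLike.congr_fun hder v
    simp only [ContinuousLinearMap.add_apply, dotCLM_apply] at this
    rw [dotProduct_comm, dotProduct_comm (A *ᵥ q.1 + B *ᵥ q.2)]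
    simp only [dotProduct_add]
    linarith
  have hAB : A *ᵥ p.1 + B *ᵥ p.2 = A *ᵥ q.1 + B *ᵥ q.2 := dotProduct_eq _ _ hlin
  -- matrix algebra
  have hdetCT : IsUnit Cᵀ.det := by
    rw [det_transpose]; exact (isUnit_iff_isUnit_det C).mp hC
  have h1 := hfoc p hp
  have h2 := hfoc q hq
  have hCy : Cᵀ *ᵥ (p.1 - q.1) = (D + Dᵀ) *ᵥ (q.2 - p.2) := by
    rw [mulVec_sub, mulVec_sub]
    have h12 : Cᵀ *ᵥ p.1 + (D + Dᵀ) *ᵥ p.2 = Cᵀ *ᵥ q.1 + (D + Dᵀ) *ᵥ q.2 := by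
      have h := h1.trans h2.symm
      rw [add_assoc, add_assoc] at h
      exact add_left_cancel h
    rw [sub_eq_sub_iff_add_eq_add]
    rw [h12]; abel
  have hy : p.1 - q.1 = (Cᵀ)⁻¹ *ᵥ ((D + Dᵀ) *ᵥ (q.2 - p.2)) := by
    rw [← hCy, mulVec_mulVec, nonsing_inv_mul _ hdetCT, one_mulVec]
  have hA : A *ᵥ (p.1 - q.1) = B *ᵥ (q.2 - p.2) := by
    rw [mulVec_sub, mulVec_sub, sub_eq_sub_iff_add_eq_add, hAB]; abel
  have hzero : (B - A * (Cᵀ)⁻¹ * (D + Dᵀ)) *ᵥ (q.2 - p.2) = 0 := by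
    rw [sub_mulVec]
    have : (A * (Cᵀ)⁻¹ * (D + Dᵀ)) *ᵥ (q.2 - p.2) = B *ᵥ (q.2 - p.2) := by
      rw [← mulVec_mulVec, ← mulVec_mulVec, ← hy, hA]
    rw [this, sub_self]
  have hz : p.2 = q.2 := by
    have hinj := mulVec_injective_iff_isUnit.mpr hBACD
    have h0 : q.2 - p.2 = 0 := hinj (by rw [hzero, mulVec_zero])
    exact (sub_eq_zero.mp h0).symm
  have hy1 : p.1 = q.1 := by
    have h0 : q.2 - p.2 = 0 := by rw [← hz, sub_self]
    rw [h0, mulVec_zero] at hCy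
    have hinjC := mulVec_injective_iff_isUnit.mpr ((isUnit_iff_isUnit_det Cᵀ).mpr hdetCT)
    have : p.1 - q.1 = 0 := hinjC (by rw [hCy, mulVec_zero])
    exact sub_eq_zero.mp this
  exact Prod.ext hy1 hz
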